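/- For every natural number n > 0, the self-membership of the set of all sets of size n is independent in BST: letting α_n := ∃y∀x(x∈y ↔ card_n(x)) and σ_n := ∀y(∀x(x∈y ↔ card_n(x)) → y∈y), both BST ∪ {α_n, σ_n} and BST ∪ {α_n, ¬σ_n} are satisfiable. -/

import Mathlib

open FirstOrder FirstOrder.Language

namespace SetParadox

/-- The language with a single binary relation symbol `∈`. -/
def L : Language := ⟨fun _ => Empty, fun n => match n with | 2 => Unit | _ => Empty⟩

/-- The membership relation symbol. -/
def memRel : L.Relations 2 := Unit.unit

/-- `memF t₁ t₂` is the atomic formula `t₁ ∈ t₂`. -/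
def memF {n : ℕ} (t₁ t₂ : L.Term (Empty ⊕ Fin n)) : L.BoundedFormula Empty n :=
  memRel.boundedFormula₂ t₁ t₂

/-- Extensionality: `∀y∀z(∀x(x∈y ↔ x∈z) → y=z)`. -/
def extAx : L.Sentence :=
  ∀' ∀' ((∀' (memF (&2) (&0) ⇔ memF (&2) (&1))) ⟹ ((&0) =' (&1)))

/-- Basic set theory: the theory whose only axiom is extensionality. -/
def BST : L.Theory := {extAx}

/-- The UC-instance `∃y∀x(x∈y ↔ φ(x))` determined by a formula `φ` with one free
variable `x` (so that `y` does not occur free in `φ`). -/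
def UCinst (φ : L.BoundedFormula Empty 1) : L.Sentence :=
  ∃' ∀' (memF (&1) (&0) ⇔ φ.liftAt 1 0)

/-- Prefix a formula in context `k + 1` with `k` existential quantifiers,
yielding a formula in context `1`. -/
def exsN : ∀ (k : ℕ), L.BoundedFormula Empty (k + 1) → L.BoundedFormula Empty 1
  | 0, φ => φ
  | k + 1, φ => exsN k (∃' φ)

/-- Finite conjunction of a list of formulas. -/
def conjL {m : ℕ} : List (L.BoundedFormula Empty m) → L.BoundedFormula Empty m
  | [] => ⊤
  | φ :: l => φ ⊓ conjL l

/-- Finite disjunction of a list of formulas. -/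
def disjL {m : ℕ} : List (L.BoundedFormula Empty m) → L.BoundedFormula Empty m
  | [] => ⊥
  | φ :: l => φ ⊔ disjL l

/-- `card_n(y)`: `y` has exactly `n` elements.  For `n = 0` it is `∀x ¬x∈y`; for `n ≥ 1`
it is `∃x₁…∃xₙ(⋀_{i<j} xᵢ≠xⱼ ∧ ⋀_i xᵢ∈y ∧ ∀x(x∈y → ⋁_i x=xᵢ))`.
The free variable `y` is `&0`; the witnesses `xᵢ` are `&(i+1)`. -/
def cardF : ℕ → L.BoundedFormula Empty 1
  | 0 => ∀' ∼(memF (&1) (&0))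
  | m + 1 =>
    exsN (m + 1) <|
      conjL (((List.finRange (m + 1)) ×ˢ (List.finRange (m + 1))).filterMap fun p =>
          if p.1 < p.2 then some (∼((&p.1.succ) =' (&p.2.succ))) else none) ⊓
      conjL ((List.finRange (m + 1)).map fun i => memF (&i.succ) (&(0 : Fin (m + 2)))) ⊓
      (∀' (memF (&(Fin.last (m + 2))) (&(0 : Fin (m + 3))) ⟹
        disjL ((List.finRange (m + 1)).map fun i =>
          (&(Fin.last (m + 2))) =' (&(i.succ.castSucc : Fin (m + 3))))))

/-- `∀y(∀x(x∈y ↔ φ(x)) → y∈y)`: the set defined by `φ` is a member of itself. -/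
def selfMemOf (φ : L.BoundedFormula Empty 1) : L.Sentence :=
  ∀' ((∀' (memF (&1) (&0) ⇔ φ.liftAt 1 0)) ⟹ memF (&0) (&0))

def mkS (M : Type) (r : M → M → Prop) : L.Structure M where
  funMap {k} f := f.elim
  RelMap {k} R := match k, R with
    | 2, _ => fun v => r (v 0) (v 1)
    | 0, R => R.elim
    | 1, R => R.elim
    | (_+3), R => R.elim

@[simp] lemma snoc_zero' {α : Type*} {n : ℕ} (g : Fin (n + 1) → α) (a : α) :
    (Fin.snoc g a : Fin (n + 2) → α) 0 = g 0 := by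
  rw [show (0 : Fin (n + 2)) = Fin.castSucc 0 from rfl, Fin.snoc_castSucc]

section Sem
variable {M : Type} [L.Structure M]

def memM (a b : M) : Prop := Structure.RelMap (L := L) memRel ![a, b]

@[simp] lemma realize_memF {k : ℕ} (t₁ t₂ : L.Term (Empty ⊕ Fin k)) (v : Empty → M)
    (xs : Fin k → M) :
    (memF t₁ t₂).Realize v xs ↔ memM (t₁.realize (Sum.elim v xs)) (t₂.realize (Sum.elim v xs)) := by
  rw [memF, BoundedFormula.realize_rel₂]; rfl

lemma realize_conjL {m : ℕ} (l : List (L.BoundedFormula Empty m)) (v : Empty → M)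
    (xs : Fin m → M) : (conjL l).Realize v xs ↔ ∀ φ ∈ l, φ.Realize v xs := by
  induction l with
  | nil => simp [conjL]
  | cons φ l ih => simp [conjL, ih]

lemma realize_disjL {m : ℕ} (l : List (L.BoundedFormula Empty m)) (v : Empty → M)
    (xs : Fin m → M) : (disjL l).Realize v xs ↔ ∃ φ ∈ l, φ.Realize v xs := by
  induction l with
  | nil => simp [disjL]
  | cons φ l ih => simp [disjL, ih]

lemma realize_exsN (k : ℕ) (φ : L.BoundedFormula Empty (k + 1)) (v : Empty → M)
    (xs : Fin 1 → M) :
    (exsN k φ).Realize v xs ↔ ∃ g : Fin (k + 1) → M, g 0 = xs 0 ∧ φ.Realize v g := by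
  induction k with
  | zero =>
    rw [exsN]
    constructor
    · exact fun h => ⟨xs, rfl, h⟩
    · rintro ⟨g, h0, h⟩
      have : g = xs := funext fun i => by
        have : i = 0 := Fin.ext (by omega)
        rw [this, h0]
      rwa [this] at h
  | succ k ih =>
    rw [exsN, ih]
    simp only [BoundedFormula.realize_ex]
    constructor
    · rintro ⟨g, h0, a, h⟩
      refine ⟨Fin.snoc g a, ?_, h⟩
      rw [snoc_zero']
      exact h0
    · rintro ⟨h, h0, hr⟩
      refine ⟨Fin.init h, ?_, h (Fin.last _), ?_⟩
      · rw [← h0]; rfl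
      · rwa [Fin.snoc_init_self]

lemma realize_cardF (m : ℕ) (v : Empty → M) (y : M) :
    (cardF (m + 1)).Realize v ![y] ↔
      ∃ x : Fin (m + 1) → M, (∀ i j : Fin (m + 1), i < j → x i ≠ x j) ∧
        (∀ i, memM (x i) y) ∧ (∀ a, memM a y → ∃ i, a = x i) := by
  rw [cardF, realize_exsN]
  have key : ∀ g : Fin (m + 2) → M,
      (conjL (((List.finRange (m + 1)) ×ˢ (List.finRange (m + 1))).filterMap fun p =>
          if p.1 < p.2 then some (∼((&p.1.succ) =' (&p.2.succ))) else none) ⊓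
      conjL ((List.finRange (m + 1)).map fun i => memF (&i.succ) (&(0 : Fin (m + 2)))) ⊓
      (∀' (memF (&(Fin.last (m + 2))) (&(0 : Fin (m + 3))) ⟹
        disjL ((List.finRange (m + 1)).map fun i =>
          (&(Fin.last (m + 2))) =' (&(i.succ.castSucc : Fin (m + 3))))))).Realize v g ↔
      ((∀ i j : Fin (m + 1), i < j → g i.succ ≠ g j.succ) ∧
       (∀ i : Fin (m + 1), memM (g i.succ) (g 0)) ∧
       (∀ a, memM a (g 0) → ∃ i : Fin (m + 1), a = g i.succ)) := by
    intro g
    simp only [BoundedFormula.realize_inf, realize_conjL, BoundedFormula.realize_all,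
      BoundedFormula.realize_imp, realize_disjL, List.mem_filterMap, List.mem_map,
      List.mem_product, List.mem_finRange, true_and, and_true]
    constructor
    · rintro ⟨⟨h1, h2⟩, h3⟩
      refine ⟨fun i j hij => ?_, fun i => ?_, fun a ha => ?_⟩
      · have := h1 (∼((&(i.succ : Fin (m+2))) =' (&j.succ))) ⟨⟨i, j⟩, by simp [hij]⟩
        simpa using this
      · have := h2 _ ⟨i, rfl⟩
        simpa using this
      · have := h3 a
        simp only [realize_memF, Term.realize_var, Sum.elim_inr, Fin.snoc_last, snoc_zero', Function.comp_apply] at this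
        obtain ⟨φ, ⟨i, rfl⟩, hφ⟩ := this ha
        refine ⟨i, ?_⟩
        have h' : a = (Fin.snoc g a : Fin (m + 3) → M) i.castSucc.succ := by simpa [Fin.snoc_castSucc, Function.comp, Function.comp_apply] using hφ
        rwa [Fin.succ_castSucc, Fin.snoc_castSucc] at h'
    · rintro ⟨h1, h2, h3⟩
      refine ⟨⟨fun φ hφ => ?_, fun φ hφ => ?_⟩, fun a ha => ?_⟩
      · obtain ⟨⟨i, j⟩, -, hij⟩ := hφ
        by_cases h : i < j
        · rw [if_pos h, Option.some_inj] at hij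
          subst hij
          simpa using h1 i j h
        · rw [if_neg h] at hij; exact absurd hij (by simp)
      · obtain ⟨i, rfl⟩ := hφ
        simpa using h2 i
      · simp only [realize_memF, Term.realize_var, Sum.elim_inr, Fin.snoc_last,
          snoc_zero', Function.comp_apply] at ha
        obtain ⟨i, hi⟩ := h3 a ha
        exact ⟨_, ⟨i, rfl⟩, by have h' : a = (Fin.snoc g a : Fin (m + 3) → M) i.castSucc.succ := (by rw [Fin.succ_castSucc, Fin.snoc_castSucc]; exact hi); simpa [Fin.snoc_castSucc, Function.comp, Function.comp_apply] using h'⟩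
  constructor
  · rintro ⟨g, h0, hg⟩
    rw [key] at hg
    have h0' : g 0 = y := by simpa using h0
    refine ⟨fun i => g i.succ, hg.1, ?_, ?_⟩
    · intro i; rw [← h0']; exact hg.2.1 i
    · intro a ha; rw [← h0'] at ha; exact hg.2.2 a ha
  · rintro ⟨x, h1, h2, h3⟩
    refine ⟨Fin.cons y x, by simp, ?_⟩
    rw [key]
    refine ⟨fun i j hij => by simpa [Fin.cons_succ] using h1 i j hij, fun i => ?_, fun a ha => ?_⟩
    · simpa [Fin.cons_succ, Fin.cons_zero] using h2 i
    · obtain ⟨i, hi⟩ := h3 a (by simpa [Fin.cons_zero] using ha)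
      exact ⟨i, by simpa [Fin.cons_succ] using hi⟩


@[simp] lemma snocA {α : Type*} (g : Fin 0 → α) (a : α) : (Fin.snoc g a : Fin 1 → α) 0 = a := by
  simp [Fin.snoc]

@[simp] lemma snocB {α : Type*} (g : Fin 1 → α) (a : α) : (Fin.snoc g a : Fin 2 → α) 1 = a := by
  simp [Fin.snoc]

@[simp] lemma snocC {α : Type*} (g : Fin 2 → α) (a : α) : (Fin.snoc g a : Fin 3 → α) 2 = a := by
  simp [Fin.snoc]

@[simp] lemma snocD {α : Type*} (g : Fin 2 → α) (a : α) : (Fin.snoc g a : Fin 3 → α) 1 = g 1 := by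
  have : (1 : Fin 3) = Fin.castSucc 1 := rfl
  rw [this, Fin.snoc_castSucc]

lemma realize_extAx :
    Sentence.Realize M extAx ↔ ∀ a b : M, (∀ c, memM c a ↔ memM c b) → a = b := by
  simp [extAx, Sentence.Realize, Formula.Realize, BoundedFormula.realize_all,
    BoundedFormula.realize_imp, BoundedFormula.realize_iff, BoundedFormula.realize_bdEqual,
    realize_memF, Term.realize_var, Function.comp_apply]

lemma realize_UCinst (φ : L.BoundedFormula Empty 1) :
    Sentence.Realize M (UCinst φ) ↔
      ∃ Y : M, ∀ x : M, memM x Y ↔ φ.Realize (default : Empty → M) ![x] := by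
  simp only [UCinst, Sentence.Realize, Formula.Realize, BoundedFormula.realize_ex,
    BoundedFormula.realize_all, BoundedFormula.realize_iff, realize_memF, Term.realize_var,
    Sum.elim_inr, Function.comp_apply,
    BoundedFormula.realize_liftAt_one (n := 1) (m := 0) (by omega)]
  refine exists_congr fun Y => forall_congr' fun x => ?_
  have e : (Fin.snoc (Fin.snoc (default : Fin 0 → M) Y) x ∘
      fun i : Fin 1 => if (i : ℕ) < 0 then i.castSucc else i.succ) = ![x] := by
    funext i
    have : i = 0 := Fin.ext (by omega)
    subst this
    simp [Fin.snoc]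
  rw [e]
  simp

lemma realize_selfMemOf (φ : L.BoundedFormula Empty 1) :
    Sentence.Realize M (selfMemOf φ) ↔
      ∀ Y : M, (∀ x : M, memM x Y ↔ φ.Realize (default : Empty → M) ![x]) → memM Y Y := by
  simp only [selfMemOf, Sentence.Realize, Formula.Realize, BoundedFormula.realize_all,
    BoundedFormula.realize_imp, BoundedFormula.realize_iff, realize_memF, Term.realize_var,
    Sum.elim_inr, Function.comp_apply,
    BoundedFormula.realize_liftAt_one (n := 1) (m := 0) (by omega)]
  refine forall_congr' fun Y => ?_
  have e : (Fin.snoc (Fin.snoc (default : Fin 0 → M) Y) · ∘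
      fun i : Fin 1 => if (i : ℕ) < 0 then i.castSucc else i.succ) = fun x => ![x] := by
    funext x i
    have : i = 0 := Fin.ext (by omega)
    subst this
    simp [Fin.snoc]
  refine imp_congr (forall_congr' fun x => ?_) (by simp)
  have e' := congrFun e x
  rw [e']
  simp

end Sem

lemma pairwise_iff_inj {α : Type*} {k : ℕ} (e : Fin k → α) :
    (∀ i j : Fin k, i < j → e i ≠ e j) ↔ Function.Injective e := by
  constructor
  · intro h a b hab
    by_contra hne
    rcases lt_trichotomy a b with h1 | h1 | h1
    · exact h a b h1 hab
    · exact hne h1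
    · exact h b a h1 hab.symm
  · intro h a b hab hne
    exact absurd (h hne) (ne_of_lt hab)

lemma memM_mkS {M : Type} (r : M → M → Prop) (a b : M) :
    (@memM M (mkS M r) a b) ↔ r a b := Iff.rfl

section ModelA
variable (m : ℕ)

abbrev MA := Fin m ⊕ Fin (m + 1)

def rA : MA m → MA m → Prop
  | x, .inl k => ∃ j : Fin m, x = .inl j ∧ j < k
  | x, .inr i => if i = 0 then (∃ b, x = .inr b) else ((∃ j, x = .inl j) ∨ x = .inr i)

lemma rA_ext : ∀ a b : MA m, (∀ c, rA m c a ↔ rA m c b) → a = b := by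
  have selfr : ∀ i : Fin (m + 1), rA m (.inr i) (.inr i) := by
    intro i
    by_cases hi : i = 0 <;> simp [rA, hi]
  rintro (⟨j⟩ | ⟨i⟩) (⟨k⟩ | ⟨i'⟩) h
  · by_contra hne
    have hjk : j ≠ k := fun hh => hne (by rw [hh])
    rcases lt_or_gt_of_ne hjk with hlt | hlt
    · have := (h (.inl j)).mpr ⟨j, rfl, hlt⟩
      obtain ⟨j', hj', h2⟩ := this
      cases hj'
      exact absurd h2 (lt_irrefl _)
    · have := (h (.inl k)).mp ⟨k, rfl, hlt⟩
      obtain ⟨j', hj', h2⟩ := this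
      cases hj'
      exact absurd h2 (lt_irrefl _)
  · exfalso
    have := (h (.inr i')).mpr (selfr i')
    obtain ⟨j', hj', -⟩ := this
    exact absurd hj' (by simp)
  · exfalso
    have := (h (.inr i)).mp (selfr i)
    obtain ⟨j', hj', -⟩ := this
    exact absurd hj' (by simp)
  · by_contra hne
    have hii : i ≠ i' := fun hh => hne (by rw [hh])
    by_cases hi : i = 0
    · subst hi
      have := (h (.inr 0)).mp (selfr 0)
      rw [rA] at this
      rw [if_neg (Ne.symm hii)] at this
      rcases this with ⟨j, hj⟩ | hj
      · exact absurd hj (by simp)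
      · exact hii (by injection hj)
    · have := (h (.inr i)).mp (selfr i)
      rw [rA] at this
      by_cases hi' : i' = 0
      · subst hi'
        rw [if_pos rfl] at this
        have h2 := (h (.inr 0)).mpr (selfr 0)
        rw [rA, if_neg hi] at h2
        rcases h2 with ⟨j, hj⟩ | hj
        · exact absurd hj (by simp)
        · injection hj with hh
          exact hi hh.symm
      · rw [if_neg hi'] at this
        rcases this with ⟨j, hj⟩ | hj
        · exact absurd hj (by simp)
        · exact hii (by injection hj)

def cardSemA (x : MA m) : Prop :=
  ∃ e : Fin (m + 1) → MA m, (∀ i j : Fin (m + 1), i < j → e i ≠ e j) ∧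
    (∀ i, rA m (e i) x) ∧ (∀ a, rA m a x → ∃ i, a = e i)

lemma cardSemA_iff : ∀ x : MA m, cardSemA m x ↔ ∃ i : Fin (m + 1), x = .inr i := by
  rintro (⟨k⟩ | ⟨i⟩)
  · constructor
    · rintro ⟨e, hd, hm, -⟩
      exfalso
      have hm' : ∀ i, ∃ j : Fin m, e i = .inl j ∧ j < k := hm
      choose f hf using hm'
      have finj : Function.Injective f := by
        intro a b hab
        refine (pairwise_iff_inj e).mp hd ?_
        rw [(hf a).1, (hf b).1, hab]
      have := Fintype.card_le_of_injective f finj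
      simp at this
    · rintro ⟨i, hi⟩
      exact absurd hi (by simp)
  · refine iff_of_true ?_ ⟨i, rfl⟩
    by_cases hi : i = 0
    · subst hi
      refine ⟨fun b => .inr b, ?_, ?_, ?_⟩
      · intro a b hab hne
        injection hne with hh
        exact absurd hh (ne_of_lt hab)
      · intro b; simp [rA]
      · intro a ha
        have : ∃ b, a = Sum.inr b := by simpa [rA] using ha
        obtain ⟨b, rfl⟩ := this
        exact ⟨b, rfl⟩
    · refine ⟨fun kk => if h : (kk : ℕ) < m then .inl ⟨kk, h⟩ else .inr i, ?_, ?_, ?_⟩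
      · intro a b hab hne
        have hab' : (a : ℕ) < (b : ℕ) := hab
        by_cases ha : (a : ℕ) < m <;> by_cases hb : (b : ℕ) < m <;>
          simp [ha, hb, Fin.ext_iff] at hne <;> omega
      · intro kk
        by_cases h : (kk : ℕ) < m <;> simp [rA, hi, h]
      · intro a ha
        have ha' : (∃ j : Fin m, a = .inl j) ∨ a = .inr i := by simpa [rA, hi] using ha
        rcases ha' with ⟨j, rfl⟩ | rfl
        · refine ⟨⟨(j : ℕ), by omega⟩, ?_⟩
          simp [j.isLt]
        · refine ⟨Fin.last m, ?_⟩
          simp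

lemma modelA_works :
    letI := mkS (MA m) (rA m)
    (Sentence.Realize (MA m) extAx) ∧
    (Sentence.Realize (MA m) (UCinst (cardF (m + 1)))) ∧
    (Sentence.Realize (MA m) (selfMemOf (cardF (m + 1)))) := by
  letI := mkS (MA m) (rA m)
  have hmem : ∀ a b : MA m, memM a b ↔ rA m a b := fun a b => Iff.rfl
  have hcard : ∀ (v : Empty → MA m) (x : MA m), (cardF (m + 1)).Realize v ![x] ↔
      cardSemA m x := by
    intro v x
    rw [realize_cardF]
    exact Iff.rfl
  have selfr : rA m (.inr 0) (.inr 0) := by simp [rA]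
  have hY : ∀ x : MA m, rA m x (.inr 0) ↔ cardSemA m x := by
    intro x
    rw [cardSemA_iff]
    simp [rA]
  refine ⟨?_, ?_, ?_⟩
  · exact (realize_extAx (M := MA m)).mpr (rA_ext m)
  · exact (realize_UCinst (M := MA m) _).mpr ⟨.inr 0, fun x => by rw [hcard _ x]; exact hY x⟩
  · refine (realize_selfMemOf (M := MA m) _).mpr ?_
    intro Y hYp
    have hYp' : ∀ x : MA m, rA m x Y ↔ cardSemA m x := fun x => by
      rw [← hcard _ x]; exact hYp x
    have : Y = Sum.inr 0 := by
      refine rA_ext m Y (.inr 0) fun c => ?_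
      rw [hYp' c, hY c]
    rw [hmem, this]
    exact selfr

end ModelA

section ModelB
variable (m : ℕ)

abbrev MB := Fin (m + 2) ⊕ Unit

def rB : MB m → MB m → Prop
  | x, .inl j => ∃ i : Fin (m + 2), x = .inl i ∧ i ≠ j
  | x, .inr _ => ∃ i : Fin (m + 2), x = .inl i

lemma rB_ext : ∀ a b : MB m, (∀ c, rB m c a ↔ rB m c b) → a = b := by
  rintro (⟨j⟩ | ⟨⟩) (⟨k⟩ | ⟨⟩) h
  · by_contra hne
    have hjk : j ≠ k := fun hh => hne (by rw [hh])
    have := (h (.inl k)).mp ⟨k, rfl, hjk.symm⟩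
    obtain ⟨i, hi, hik⟩ := this
    injection hi with hh
    exact hik hh.symm
  · exfalso
    have := (h (.inl j)).mpr ⟨j, rfl⟩
    obtain ⟨i, hi, hij⟩ := this
    injection hi with hh
    exact hij hh.symm
  · exfalso
    have := (h (.inl k)).mp ⟨k, rfl⟩
    obtain ⟨i, hi, hik⟩ := this
    injection hi with hh
    exact hik hh.symm
  · rfl

def cardSemB (x : MB m) : Prop :=
  ∃ e : Fin (m + 1) → MB m, (∀ i j : Fin (m + 1), i < j → e i ≠ e j) ∧
    (∀ i, rB m (e i) x) ∧ (∀ a, rB m a x → ∃ i, a = e i)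

lemma cardSemB_iff : ∀ x : MB m, cardSemB m x ↔ ∃ j : Fin (m + 2), x = .inl j := by
  rintro (⟨j⟩ | ⟨⟩)
  · refine iff_of_true ?_ ⟨j, rfl⟩
    refine ⟨fun i => .inl (j.succAbove i), ?_, ?_, ?_⟩
    · intro a b hab hne
      injection hne with hh
      exact absurd (Fin.succAbove_right_injective hh) (ne_of_lt hab)
    · intro i
      exact ⟨j.succAbove i, rfl, Fin.succAbove_ne j i⟩
    · rintro a ⟨i, rfl, hij⟩
      obtain ⟨t, ht⟩ := Fin.exists_succAbove_eq hij
      exact ⟨t, by simp only []; rw [ht]⟩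
  · constructor
    · rintro ⟨e, hd, -, hc⟩
      exfalso
      have hc' : ∀ i : Fin (m + 2), ∃ t, (.inl i : MB m) = e t := fun i => hc _ ⟨i, rfl⟩
      choose f hf using hc'
      have finj : Function.Injective f := by
        intro a b hab
        have : (.inl a : MB m) = .inl b := by rw [hf a, hf b, hab]
        injection this
      have := Fintype.card_le_of_injective f finj
      simp at this
    · rintro ⟨j, hj⟩
      exact absurd hj (by simp)

lemma modelB_works :
    letI := mkS (MB m) (rB m)
    (Sentence.Realize (MB m) extAx) ∧
    (Sentence.Realize (MB m) (UCinst (cardF (m + 1)))) ∧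
    (Sentence.Realize (MB m) (∼(selfMemOf (cardF (m + 1))))) := by
  letI := mkS (MB m) (rB m)
  have hcard : ∀ (v : Empty → MB m) (x : MB m), (cardF (m + 1)).Realize v ![x] ↔
      cardSemB m x := by
    intro v x
    rw [realize_cardF]
    exact Iff.rfl
  have hY : ∀ x : MB m, rB m x (.inr ()) ↔ cardSemB m x := by
    intro x
    rw [cardSemB_iff]
    exact Iff.rfl
  refine ⟨?_, ?_, ?_⟩
  · exact (realize_extAx (M := MB m)).mpr (rB_ext m)
  · exact (realize_UCinst (M := MB m) _).mpr ⟨.inr (), fun x => by rw [hcard _ x]; exact hY x⟩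
  · refine (Formula.realize_not).mpr ?_
    intro hS
    have h := (realize_selfMemOf (M := MB m) _).mp hS
    have := h (.inr ()) fun x => by rw [hcard _ x]; exact hY x
    obtain ⟨i, hi⟩ := (this : rB m (.inr ()) (.inr ()))
    exact absurd hi (by simp)

end ModelB


/-- For every `n > 0`, the self-membership of the set of all sets of size `n` is
independent in `BST`: with `α_n := ∃y∀x(x∈y ↔ card_n(x))` and
`σ_n := ∀y(∀x(x∈y ↔ card_n(x)) → y∈y)`, both `BST ∪ {α_n, σ_n}` and
`BST ∪ {α_n, ¬σ_n}` are satisfiable. -/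
theorem size_n_selfMem_independent (n : ℕ) (hn : 0 < n) :
    (BST ∪ {UCinst (cardF n), selfMemOf (cardF n)}).IsSatisfiable ∧
    (BST ∪ {UCinst (cardF n), ∼(selfMemOf (cardF n))}).IsSatisfiable := by
  obtain ⟨m, rfl⟩ : ∃ m, n = m + 1 := ⟨n - 1, by omega⟩
  constructor
  · letI := mkS (MA m) (rA m)
    obtain ⟨h1, h2, h3⟩ := modelA_works m
    have : (BST ∪ {UCinst (cardF (m + 1)), selfMemOf (cardF (m + 1))}).Model (MA m) := by
      rw [Theory.model_iff]
      intro φ hφ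
      simp only [BST, Set.mem_union, Set.mem_singleton_iff, Set.mem_insert_iff] at hφ
      rcases hφ with rfl | rfl | rfl
      · exact h1
      · exact h2
      · exact h3
    exact Theory.Model.isSatisfiable (MA m)
  · letI := mkS (MB m) (rB m)
    obtain ⟨h1, h2, h3⟩ := modelB_works m
    have : (BST ∪ {UCinst (cardF (m + 1)), ∼(selfMemOf (cardF (m + 1)))}).Model (MB m) := by
      rw [Theory.model_iff]
      intro φ hφ
      simp only [BST, Set.mem_union, Set.mem_singleton_iff, Set.mem_insert_iff] at hφ
      rcases hφ with rfl | rfl | rfl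
      · exact h1
      · exact h2
      · exact h3
    exact Theory.Model.isSatisfiable (MB m)

end SetParadox
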